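/- Let 1 < √b < a ≤ b ≤ 2, let α : ℝ → [a,b] be continuous, let λ > 0, and let u ∈ ℝ satisfy |α(u) − α(v)| = o(1/|log|u−v||) as v → u. Define f(t,x) = exp(−λ(x−t))·1_{[t,∞)}(x). Then for every t ∈ ℝ, lim_{r→0⁺} ∫_ℝ | (f(u+rt, u+rz) − f(u, u+rz)) / r^{1/α(u) − 1/α(u+rz)} + s(t,z) |^{a,b} dz = 0, where s(t,z) = 1_{(0,t)}(z) if t ≥ 0 and s(t,z) = −1_{(t,0)}(z) if t < 0. Consequently the multistable reverse Ornstein–Uhlenbeck process Y(t) = ∫_t^∞ exp(−λ(x−t)) dM_α(x) satisfies the localisability condition of the main theorem at u with index h₀ = 1/α(u) and local form kernel k(t,z) = −s(t,z). -/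

import Mathlib

open MeasureTheory Filter Set Topology ProbabilityTheory BoundedContinuousFunction

noncomputable section

/-- Membership in `F_α`: `f` is measurable and either a.e. zero or there is a (unique)
`λ > 0` with `∫ |f(x)/λ|^{α(x)} dx = 1`. -/
def MemFalpha (α f : ℝ → ℝ) : Prop :=
  Measurable f ∧ (f =ᵐ[volume] (0 : ℝ → ℝ) ∨ ∃ lam > (0:ℝ), ∫ x : ℝ, |f x / lam| ^ α x = 1)

/-- The quasinorm `‖f‖_α`, the unique `λ > 0` with `∫ |f(x)/λ|^{α(x)} dx = 1`
(and `0` if no such `λ` exists, e.g. if `f = 0` a.e.). -/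
def alphaNorm (α f : ℝ → ℝ) : ℝ :=
  sInf {lam : ℝ | 0 < lam ∧ ∫ x : ℝ, |f x / lam| ^ α x = 1}

/-- `|s|^{a,b} = max{|s|^a, |s|^b}`. -/
def pab (a b s : ℝ) : ℝ := max (|s| ^ a) (|s| ^ b)

/-- Membership in `F_{a,b}`: measurable with `∫ |f(x)|^{a,b} dx < ∞`. -/
def MemFab (a b : ℝ) (f : ℝ → ℝ) : Prop :=
  Measurable f ∧ Integrable (fun x : ℝ => pab a b (f x))

/-- The norm `‖f‖_p = (∫ |f(x)|^p dx)^{1/p}`. -/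
def pNorm (p : ℝ) (f : ℝ → ℝ) : ℝ := (∫ x : ℝ, |f x| ^ p) ^ (1 / p)

/-- Membership in `E₀`: Lebesgue measurable with finite Lebesgue measure. -/
def MemE0 (A : Set ℝ) : Prop := MeasurableSet A ∧ volume A < ⊤

/-- The signed open-interval indicator `s(t,z)`: `1_{(0,t)}(z)` if `t ≥ 0` and
`−1_{(t,0)}(z)` if `t < 0`. -/
def sgnIndOpen (t z : ℝ) : ℝ :=
  if 0 ≤ t then (Set.Ioo 0 t).indicator (fun _ => (1:ℝ)) z
  else -((Set.Ioo t 0).indicator (fun _ => (1:ℝ)) z)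


lemma pab_nonneg (a b s : ℝ) : 0 ≤ pab a b s :=
  le_max_of_le_left (Real.rpow_nonneg (abs_nonneg s) a)

lemma pab_le_pab {a b : ℝ} (ha : 0 < a) (hb : 0 < b) {s x : ℝ} (h : |s| ≤ x) :
    pab a b s ≤ pab a b x := by
  have hx : |x| = x := abs_of_nonneg ((abs_nonneg s).trans h)
  exact max_le_max
    (Real.rpow_le_rpow (abs_nonneg _) (by rw [hx]; exact h) ha.le)
    (Real.rpow_le_rpow (abs_nonneg _) (by rw [hx]; exact h) hb.le)

lemma pab_le_rpow {a b : ℝ} (ha : 0 < a) (hab : a ≤ b) {x : ℝ} (h0 : 0 ≤ x) (h1 : x ≤ 1) :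
    pab a b x ≤ x ^ a := by
  rcases eq_or_lt_of_le h0 with h | h
  · simp [pab, ← h, Real.zero_rpow (ne_of_gt ha), Real.zero_rpow (ne_of_gt (ha.trans_le hab))]
  · have : |x| = x := abs_of_nonneg h0
    rw [pab, this]
    exact max_le le_rfl (Real.rpow_le_rpow_of_exponent_ge h h1 hab)

lemma pab_le_add {a b : ℝ} {x : ℝ} (h0 : 0 ≤ x) :
    pab a b x ≤ x ^ a + x ^ b := by
  rw [pab, abs_of_nonneg h0]
  exact max_le (le_add_of_nonneg_right (Real.rpow_nonneg h0 b))
    (le_add_of_nonneg_left (Real.rpow_nonneg h0 a))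

set_option maxHeartbeats 1000000 in
lemma unif_log {a b : ℝ} (ha : 1 < a) {α : ℝ → ℝ} (hα : ∀ x, α x ∈ Set.Icc a b) (u : ℝ)
    (hlog : ∀ ε > (0:ℝ), ∃ δ > (0:ℝ), ∀ v : ℝ, v ≠ u → |u - v| < δ →
      |α u - α v| * |Real.log (|u - v|)| ≤ ε)
    {T : ℝ} (hT : 1 ≤ T) :
    ∀ η > (0:ℝ), ∃ r₂ > (0:ℝ), ∀ r : ℝ, 0 < r → r < r₂ → ∀ z : ℝ, |z| ≤ T →
      |(1 / α u - 1 / α (u + r * z)) * Real.log r| ≤ η := by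
  intro η hη
  have ha0 : (0:ℝ) < a := lt_trans zero_lt_one ha
  obtain ⟨δ, hδ, hδ'⟩ := hlog (η * a ^ 2 / 2) (by positivity)
  have hT0 : (0:ℝ) < T := lt_of_lt_of_le zero_lt_one hT
  refine ⟨min (δ / T) (T * T)⁻¹, by positivity, ?_⟩
  intro r hr hrlt z hzT
  by_cases hz : z = 0
  · simp [hz, hη.le]
  have hr1 : r < 1 := by
    have h1 : (T*T)⁻¹ ≤ 1 := by
      rw [inv_le_one_iff₀]; right; nlinarith
    exact lt_of_lt_of_le (lt_of_lt_of_le hrlt (min_le_right _ _)) h1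
  set v := u + r * z with hv
  have hvne : v ≠ u := by
    simp only [hv, ne_eq, add_eq_left]
    exact mul_ne_zero (ne_of_gt hr) hz
  have huv : |u - v| = r * |z| := by
    rw [hv]; rw [show u - (u + r * z) = -(r * z) by ring, abs_neg, abs_mul, abs_of_pos hr]
  have hz0 : 0 < |z| := abs_pos.mpr hz
  have huvδ : |u - v| < δ := by
    rw [huv]
    calc r * |z| ≤ r * T := by nlinarith
    _ < (δ / T) * T := by
      have := lt_of_lt_of_le hrlt (min_le_left _ _); nlinarith
    _ = δ := by field_simp
  have hkey := hδ' v hvne huvδ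
  -- |log r| ≤ 2 |log (r |z|)|
  have hrz1 : r * |z| < 1 := by
    have h2 : r < (T*T)⁻¹ := lt_of_lt_of_le hrlt (min_le_right _ _)
    have : r * |z| ≤ r * T := by nlinarith
    calc r * |z| ≤ r * T := this
      _ < (T*T)⁻¹ * T := by nlinarith
      _ ≤ 1 := by rw [inv_mul_le_iff₀ (by positivity)]; nlinarith
  have hlogr : Real.log r < 0 := Real.log_neg hr hr1
  have hL : Real.log (r * |z|) = Real.log r + Real.log |z| := Real.log_mul (ne_of_gt hr) (ne_of_gt hz0)
  have hmain : |Real.log r| ≤ 2 * |Real.log (|u - v|)| := by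
    rw [huv]
    rcases le_or_gt (|z|) 1 with hc | hc
    · have hlz : Real.log |z| ≤ 0 := Real.log_nonpos (abs_nonneg z) hc
      have : Real.log (r * |z|) ≤ Real.log r := by rw [hL]; linarith
      rw [abs_of_neg hlogr, abs_of_neg (lt_of_le_of_lt this hlogr)]
      linarith
    · have hlz : Real.log |z| ≤ Real.log T := Real.log_le_log (by positivity) hzT
      have h2 : r < (T*T)⁻¹ := lt_of_lt_of_le hrlt (min_le_right _ _)
      have hlr2 : Real.log r < -(2 * Real.log T) := by
        have := Real.log_lt_log hr h2
        rw [Real.log_inv, Real.log_mul (ne_of_gt hT0) (ne_of_gt hT0)] at this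
        linarith
      have hlT : 0 ≤ Real.log T := Real.log_nonneg hT
      have hhalf : Real.log (r * |z|) ≤ Real.log r / 2 := by rw [hL]; linarith
      have hneg : Real.log (r * |z|) < 0 := lt_of_le_of_lt hhalf (by linarith)
      rw [abs_of_neg hlogr, abs_of_neg hneg]
      linarith
  -- put it together
  have hαu := hα u; have hαv := hα v
  have hαu0 : a ≤ α u := hαu.1
  have hαv0 : a ≤ α v := hαv.1
  have hP : 0 < α u * α v := by nlinarith
  have hdiff : 1 / α u - 1 / α v = (α v - α u) / (α u * α v) := by
    rw [div_sub_div _ _ (by nlinarith : α u ≠ 0) (by nlinarith : α v ≠ 0)]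
    ring_nf
  rw [hdiff, abs_mul, abs_div, abs_of_pos hP, abs_sub_comm, div_mul_eq_mul_div,
    div_le_iff₀ hP]
  have hA : 0 ≤ |α u - α v| := abs_nonneg _
  have hLn : 0 ≤ |Real.log (|u - v|)| := abs_nonneg _
  calc |α u - α v| * |Real.log r| ≤ |α u - α v| * (2 * |Real.log (|u - v|)|) := by nlinarith
    _ = 2 * (|α u - α v| * |Real.log (|u - v|)|) := by ring
    _ ≤ 2 * (η * a ^ 2 / 2) := by linarith
    _ = η * (a * a) := by ring
    _ ≤ η * (α u * α v) := by nlinarith [mul_le_mul hαu0 hαv0 ha0.le (le_trans ha0.le hαu0)]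

lemma aux_frac_lt {k e : ℝ} (hk : 0 ≤ k) (he : 0 < e) :
    k * (e / (3 * (k + 1))) < e / 3 := by
  rw [mul_div_assoc']
  rw [div_lt_div_iff₀ (by positivity) (by norm_num : (0:ℝ) < 3)]
  nlinarith

set_option maxHeartbeats 2000000 in
/-- localisability of multistable reverse Ornstein–Uhlenbeck motion
`Y(t) = ∫_t^∞ e^{−λ(x−t)} dM_α(x)`: with kernel `f(t,x) = e^{−λ(x−t)}1_{[t,∞)}(x)`,
for every `t`,
`∫ |(f(u+rt,u+rz) − f(u,u+rz))/r^{1/α(u)−1/α(u+rz)} + s(t,z)|^{a,b} dz → 0`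
as `r → 0⁺`; that is, the localisability condition of the main theorem holds at `u`
with index `h₀ = 1/α(u)` and limit kernel `k(t,z) = −s(t,z)`. -/
theorem multistable_reverse_OU_localisable (a b : ℝ)
    (hb1 : 1 < Real.sqrt b) (hsb : Real.sqrt b < a) (hab : a ≤ b) (hb2 : b ≤ 2)
    (α : ℝ → ℝ) (hαc : Continuous α) (hα : ∀ x, α x ∈ Set.Icc a b)
    (lam : ℝ) (hlam : 0 < lam) (u : ℝ)
    (hlog : ∀ ε > (0:ℝ), ∃ δ > (0:ℝ), ∀ v : ℝ, v ≠ u → |u - v| < δ →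
      |α u - α v| * |Real.log (|u - v|)| ≤ ε) :
    ∀ t : ℝ,
      Tendsto (fun r : ℝ => ∫ z : ℝ,
          pab a b
            ((Real.exp (-lam * ((u + r * z) - (u + r * t))) *
                (Set.Ici (u + r * t)).indicator (fun _ => (1:ℝ)) (u + r * z) -
              Real.exp (-lam * ((u + r * z) - u)) *
                (Set.Ici u).indicator (fun _ => (1:ℝ)) (u + r * z)) /
              r ^ (1 / α u - 1 / α (u + r * z)) + sgnIndOpen t z))
        (𝓝[>] (0:ℝ)) (𝓝 0) := by
  intro t
  -- basic constants
  have hb0 : 0 < Real.sqrt b := lt_trans zero_lt_one hb1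
  have hbpos : 0 < b := Real.sqrt_pos.mp hb0
  have hsq : Real.sqrt b ^ 2 = b := Real.sq_sqrt hbpos.le
  have hb1' : 1 < b := by nlinarith
  have ha1 : 1 < a := lt_trans hb1 hsb
  have ha0 : 0 < a := lt_trans zero_lt_one ha1
  have hkey : 2 * b < a * (b + 1) := by nlinarith [sq_nonneg (Real.sqrt b - 1)]
  set c : ℝ := 1/a - 1/b with hc
  have hc0 : 0 ≤ c := by
    rw [hc]; have := one_div_le_one_div_of_le ha0 hab; linarith
  have hc1 : c < 1 := by
    rw [hc]
    have h1 : 1/a < 1 := by rw [div_lt_one ha0]; exact ha1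
    have h2 : 0 < 1/b := by positivity
    linarith
  set ea : ℝ := a * (1 - c) - 1 with hea_def
  set eb : ℝ := b * (1 - c) - 1 with heb_def
  have hea : 0 < ea := by
    have : ea = (a * (b + 1) - 2 * b) / b := by
      rw [hea_def, hc]; field_simp; ring
    rw [this]; exact div_pos (by linarith) hbpos
  have heb : 0 < eb := by
    have : eb = b * (a - 1) / a := by
      rw [heb_def, hc]; field_simp; ring
    rw [this]; exact div_pos (mul_pos hbpos (by linarith)) ha0
  set T : ℝ := max |t| 1 with hT_def
  have hT1 : (1:ℝ) ≤ T := le_max_right _ _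
  have htT : |t| ≤ T := le_max_left _ _
  set C : ℝ := 2 * lam * |t| with hC_def
  have hC0 : 0 ≤ C := by positivity
  set Ka : ℝ := C ^ a / (a * lam) with hKa_def
  set Kb : ℝ := C ^ b / (b * lam) with hKb_def
  have hKa0 : 0 ≤ Ka := by positivity
  have hKb0 : 0 ≤ Kb := by positivity
  rw [NormedAddCommGroup.tendsto_nhds_zero]
  intro ε hε
  -- choose the smallness threshold for the middle part
  set x₀ : ℝ := min 1 ((ε / (3 * (|t| + 1))) ^ (1/a : ℝ)) with hx₀_def
  have hx₀pos : 0 < x₀ := by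
    apply lt_min zero_lt_one
    apply Real.rpow_pos_of_pos; positivity
  have hx₀1 : x₀ ≤ 1 := min_le_left _ _
  have hx₀a : |t| * x₀ ^ (a:ℝ) < ε / 3 := by
    have h1 : x₀ ^ (a:ℝ) ≤ ((ε / (3 * (|t| + 1))) ^ (1/a : ℝ)) ^ (a:ℝ) :=
      Real.rpow_le_rpow hx₀pos.le (min_le_right _ _) ha0.le
    rw [one_div, Real.rpow_inv_rpow (by positivity) ha0.ne'] at h1
    have h3 : 0 ≤ |t| := abs_nonneg t
    have h4 : |t| * x₀ ^ (a:ℝ) ≤ |t| * (ε / (3 * (|t| + 1))) :=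
      mul_le_mul_of_nonneg_left h1 h3
    have h5 : |t| * (ε / (3 * (|t| + 1))) < ε / 3 := aux_frac_lt h3 hε
    linarith
  set η : ℝ := x₀ / 4 with hη_def
  obtain ⟨r₂, hr₂pos, hunif⟩ := unif_log ha1 hα u hlog hT1 η (by positivity)
  set r₁ : ℝ := x₀ / (4 * (lam * |t| + 1)) with hr₁_def
  have hr₁pos : 0 < r₁ := by positivity
  set r₃ : ℝ := min 1 ((ε / (3 * (Ka + 1))) ^ (1/ea : ℝ)) with hr₃_def
  set r₄ : ℝ := min 1 ((ε / (3 * (Kb + 1))) ^ (1/eb : ℝ)) with hr₄_def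
  have hr₃pos : 0 < r₃ := lt_min zero_lt_one (Real.rpow_pos_of_pos (by positivity) _)
  have hr₄pos : 0 < r₄ := lt_min zero_lt_one (Real.rpow_pos_of_pos (by positivity) _)
  set r₀ : ℝ := min (min r₁ r₂) (min r₃ r₄) with hr₀_def
  have hr₀pos : 0 < r₀ := lt_min (lt_min hr₁pos hr₂pos) (lt_min hr₃pos hr₄pos)
  filter_upwards [Ioo_mem_nhdsGT hr₀pos] with r hrmem
  obtain ⟨hr0, hrlt⟩ := hrmem
  have hrr₁ : r < r₁ := lt_of_lt_of_le hrlt (le_trans (min_le_left _ _) (min_le_left _ _))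
  have hrr₂ : r < r₂ := lt_of_lt_of_le hrlt (le_trans (min_le_left _ _) (min_le_right _ _))
  have hrr₃ : r < r₃ := lt_of_lt_of_le hrlt (le_trans (min_le_right _ _) (min_le_left _ _))
  have hrr₄ : r < r₄ := lt_of_lt_of_le hrlt (le_trans (min_le_right _ _) (min_le_right _ _))
  have hr1 : r < 1 := lt_of_lt_of_le hrr₃ (min_le_left _ _)
  -- middle-part bound
  have hlamtr : lam * |t| * r ≤ x₀ / 4 := by
    have hpos : (0:ℝ) < lam * |t| + 1 := by positivity
    have h1 : lam * |t| * r ≤ (lam * |t| + 1) * r :=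
      mul_le_mul_of_nonneg_right (by linarith) hr0.le
    have h2 : (lam * |t| + 1) * r < (lam * |t| + 1) * r₁ :=
      mul_lt_mul_of_pos_left hrr₁ hpos
    have h3 : (lam * |t| + 1) * r₁ = x₀ / 4 := by
      rw [hr₁_def]; field_simp
    linarith
  set θmax : ℝ := lam * |t| * r + η with hθmax_def
  have hθmax0 : 0 < θmax := by positivity
  have hθmax1 : θmax ≤ x₀ / 2 := by rw [hθmax_def, hη_def]; linarith
  set x : ℝ := 2 * θmax with hx_def
  have hxx₀ : x ≤ x₀ := by rw [hx_def]; linarith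
  have hx1 : x ≤ 1 := le_trans hxx₀ hx₀1
  set P : ℝ := pab a b x with hP_def
  have hP0 : 0 ≤ P := pab_nonneg _ _ _
  have hPbound : |t| * P < ε / 3 := by
    have h1 : P ≤ x ^ (a:ℝ) := pab_le_rpow ha0 hab (by positivity) hx1
    have h2 : x ^ (a:ℝ) ≤ x₀ ^ (a:ℝ) := Real.rpow_le_rpow (by positivity) hxx₀ ha0.le
    have h3 : |t| * P ≤ |t| * x₀ ^ (a:ℝ) :=
      mul_le_mul_of_nonneg_left (le_trans h1 h2) (abs_nonneg t)
    linarith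
  -- tail quantities
  set βa : ℝ := a * (lam * r) with hβa_def
  set βb : ℝ := b * (lam * r) with hβb_def
  have hβa0 : 0 < βa := by positivity
  have hβb0 : 0 < βb := by positivity
  set Aa : ℝ := (C * r ^ ((1:ℝ) - c)) ^ (a:ℝ) with hAa_def
  set Ab : ℝ := (C * r ^ ((1:ℝ) - c)) ^ (b:ℝ) with hAb_def
  have hYbase0 : 0 ≤ C * r ^ ((1:ℝ) - c) := by positivity
  have hAa0 : 0 ≤ Aa := Real.rpow_nonneg hYbase0 _
  have hAb0 : 0 ≤ Ab := Real.rpow_nonneg hYbase0 _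
  set m : ℝ := min t 0 with hm_def
  set M : ℝ := max t 0 with hM_def
  have hM0 : 0 ≤ M := le_max_right _ _
  have hMm : M - m = |t| := by
    rw [hM_def, hm_def, max_sub_min_eq_abs]; simp
  set H : ℝ → ℝ := fun z => (Ioc m M).indicator (fun _ => P) z +
      (Ioi M).indicator (fun z => Aa * Real.exp (-βa * z) + Ab * Real.exp (-βb * z)) z with hH_def
  have hHnn : ∀ z, 0 ≤ H z := by
    intro z
    apply add_nonneg
    · exact Set.indicator_nonneg (fun _ _ => hP0) z
    · exact Set.indicator_nonneg (fun y _ => by positivity) z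
  have hi1 : Integrable ((Ioc m M).indicator (fun _ => P)) := by
    rw [integrable_indicator_iff measurableSet_Ioc]
    exact integrableOn_const measure_Ioc_lt_top.ne
  have hi2 : Integrable ((Ioi M).indicator
      (fun z => Aa * Real.exp (-βa * z) + Ab * Real.exp (-βb * z))) := by
    rw [integrable_indicator_iff measurableSet_Ioi]
    exact ((exp_neg_integrableOn_Ioi M hβa0).const_mul Aa).add
      ((exp_neg_integrableOn_Ioi M hβb0).const_mul Ab)
  have hHint : Integrable H := hi1.add hi2
  -- pointwise bound
  have hfH : ∀ᵐ z : ℝ, pab a b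
      ((Real.exp (-lam * ((u + r * z) - (u + r * t))) *
          (Set.Ici (u + r * t)).indicator (fun _ => (1:ℝ)) (u + r * z) -
        Real.exp (-lam * ((u + r * z) - u)) *
          (Set.Ici u).indicator (fun _ => (1:ℝ)) (u + r * z)) /
        r ^ (1 / α u - 1 / α (u + r * z)) + sgnIndOpen t z) ≤ H z := by
    have hzero : volume ({0, t} : Set ℝ) = 0 :=
      Set.Countable.measure_zero (Set.to_countable _) _
    filter_upwards [measure_eq_zero_iff_ae_notMem.mp hzero] with z hz
    simp only [Set.mem_insert_iff, Set.mem_singleton_iff, not_or] at hz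
    obtain ⟨hz0, hzt⟩ := hz
    -- exponent facts
    set E : ℝ := 1 / α u - 1 / α (u + r * z) with hE_def
    have hrE : (0:ℝ) < r ^ E := Real.rpow_pos_of_pos hr0 _
    have hαu := hα u
    have hαv := hα (u + r * z)
    have hαupos : 0 < α u := lt_of_lt_of_le ha0 hαu.1
    have hαvpos : 0 < α (u + r * z) := lt_of_lt_of_le ha0 hαv.1
    have hEc : |E| ≤ c := by
      rw [hE_def, hc]
      have h1 : 1/b ≤ 1/(α u) := one_div_le_one_div_of_le hαupos hαu.2
      have h2 : 1/(α u) ≤ 1/a := one_div_le_one_div_of_le ha0 hαu.1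
      have h3 : 1/b ≤ 1/(α (u + r * z)) := one_div_le_one_div_of_le hαvpos hαv.2
      have h4 : 1/(α (u + r * z)) ≤ 1/a := one_div_le_one_div_of_le ha0 hαv.1
      rw [abs_le]
      constructor
      · linarith only [h1, h4]
      · linarith only [h2, h3]
    have hrEexp : r ^ E = Real.exp (Real.log r * E) := Real.rpow_def_of_pos hr0 _
    have hηnn : (0:ℝ) ≤ η := by positivity
    have hθmax_le1 : θmax ≤ 1 := by
      rw [hθmax_def]
      linarith only [hlamtr, hx₀1, hηnn, hη_def.le, hη_def.ge]
    -- common middle-part estimate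
    have hexp_pab : ∀ θ s : ℝ, |s| = |Real.exp θ - 1| → |θ| ≤ θmax → pab a b s ≤ P := by
      intro θ s hs hθ
      have hθ1 : |θ| ≤ 1 := le_trans hθ hθmax_le1
      have h2 := Real.abs_exp_sub_one_le hθ1
      apply pab_le_pab ha0 hbpos
      rw [hs, hx_def]
      calc |Real.exp θ - 1| ≤ 2 * |θ| := h2
        _ ≤ 2 * θmax := by linarith only [hθ]
    -- log-term estimate (only valid for |z| ≤ T)
    have hlogE : |z| ≤ T → |Real.log r * E| ≤ η := by
      intro hzT
      have h := hunif r hr0 hrr₂ z hzT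
      rw [← hE_def] at h
      rwa [mul_comm] at h
    -- simplify the two arguments of exp
    rw [show -lam * (u + r * z - (u + r * t)) = -(lam * (r * z - r * t)) from by ring,
        show -lam * (u + r * z - u) = -(lam * (r * z)) from by ring]
    rcases lt_or_ge z 0 with hzneg | hzpos'
    · rcases lt_or_ge z t with hztlt | htz'
      · -- Case A : z < t, z < 0, everything vanishes
        have hi1' : u + r * z ∉ Set.Ici (u + r * t) := by
          simp only [Set.mem_Ici, not_le]
          have h := mul_lt_mul_of_pos_left hztlt hr0
          linarith only [h]
        have hi2' : u + r * z ∉ Set.Ici u := by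
          simp only [Set.mem_Ici, not_le]
          have h := mul_neg_of_pos_of_neg hr0 hzneg
          linarith only [h]
        have hsgn : sgnIndOpen t z = 0 := by
          simp only [sgnIndOpen]
          split_ifs with h0t
          · exact Set.indicator_of_notMem (fun h => absurd h.1 (not_lt.mpr hzneg.le)) _
          · rw [Set.indicator_of_notMem (fun h => absurd h.1 (not_lt.mpr hztlt.le)) _]
            exact neg_zero
        rw [Set.indicator_of_notMem hi1' _, Set.indicator_of_notMem hi2' _, hsgn]
        simp only [mul_zero, sub_zero, zero_sub, neg_zero, zero_div, add_zero, sub_self]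
        have hpz : pab a b 0 = 0 := by
          simp [pab, abs_zero, Real.zero_rpow (ne_of_gt ha0), Real.zero_rpow (ne_of_gt hbpos)]
        rw [hpz]
        exact hHnn z
      · -- Case B : t < z < 0
        have htz : t < z := lt_of_le_of_ne htz' (Ne.symm hzt)
        have htneg : t < 0 := lt_trans htz hzneg
        have hi1' : u + r * z ∈ Set.Ici (u + r * t) := by
          simp only [Set.mem_Ici]
          have h := mul_le_mul_of_nonneg_left htz.le hr0.le
          linarith only [h]
        have hi2' : u + r * z ∉ Set.Ici u := by
          simp only [Set.mem_Ici, not_le]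
          have h := mul_neg_of_pos_of_neg hr0 hzneg
          linarith only [h]
        have hsgn : sgnIndOpen t z = -1 := by
          simp only [sgnIndOpen]
          rw [if_neg (not_le.mpr htneg), Set.indicator_of_mem (Set.mem_Ioo.mpr ⟨htz, hzneg⟩)]
        rw [Set.indicator_of_mem hi1' _, Set.indicator_of_notMem hi2' _, hsgn]
        simp only [mul_one, mul_zero, sub_zero]
        rw [hrEexp, ← Real.exp_sub, ← sub_eq_add_neg]
        have hHz : H z = P := by
          simp only [hH_def]
          have hm' : m = t := min_eq_left htneg.le
          have hM' : M = 0 := max_eq_right htneg.le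
          rw [Set.indicator_of_mem (by rw [hm', hM']; exact Set.mem_Ioc.mpr ⟨htz, hzneg.le⟩),
            Set.indicator_of_notMem (by rw [hM']; exact fun h => absurd h (not_lt.mpr hzneg.le)),
            add_zero]
        rw [hHz]
        apply hexp_pab (-(lam * (r * z - r * t)) - Real.log r * E) _ rfl
        have hw : |(-(lam * (r * z - r * t)))| ≤ lam * |t| * r := by
          have h1 : (0:ℝ) ≤ z - t := by linarith only [htz]
          have h2 : z - t ≤ |t| := by linarith only [neg_abs_le t, hzneg, htz]
          rw [abs_neg, show lam * (r * z - r * t) = lam * r * (z - t) from by ring,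
            abs_of_nonneg (mul_nonneg (by positivity) h1)]
          calc lam * r * (z - t) ≤ lam * r * |t| :=
              mul_le_mul_of_nonneg_left h2 (by positivity)
            _ = lam * |t| * r := by ring
        have hlog' : |Real.log r * E| ≤ η := by
          apply hlogE
          rw [abs_of_neg hzneg]
          have h3 : |t| = -t := abs_of_neg htneg
          linarith only [h3, htz, htT]
        calc |(-(lam * (r * z - r * t)) - Real.log r * E)|
            ≤ |(-(lam * (r * z - r * t)))| + |Real.log r * E| := abs_sub _ _
          _ ≤ lam * |t| * r + η := add_le_add hw hlog'
          _ = θmax := hθmax_def.symm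
    · have hzpos : 0 < z := lt_of_le_of_ne hzpos' (Ne.symm hz0)
      rcases lt_or_ge z t with hztlt | htz'
      · -- Case C : 0 < z < t
        have htpos : 0 < t := lt_trans hzpos hztlt
        have hi1' : u + r * z ∉ Set.Ici (u + r * t) := by
          simp only [Set.mem_Ici, not_le]
          have h := mul_lt_mul_of_pos_left hztlt hr0
          linarith only [h]
        have hi2' : u + r * z ∈ Set.Ici u := by
          simp only [Set.mem_Ici]
          have h := mul_pos hr0 hzpos
          linarith only [h]
        have hsgn : sgnIndOpen t z = 1 := by
          simp only [sgnIndOpen]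
          rw [if_pos htpos.le, Set.indicator_of_mem (Set.mem_Ioo.mpr ⟨hzpos, hztlt⟩)]
        rw [Set.indicator_of_notMem hi1' _, Set.indicator_of_mem hi2' _, hsgn]
        simp only [mul_zero, mul_one, zero_sub]
        rw [hrEexp, neg_div, ← Real.exp_sub,
          show ∀ x : ℝ, -x + 1 = -(x - 1) from fun x => by ring]
        have hHz : H z = P := by
          simp only [hH_def]
          have hm' : m = 0 := min_eq_right htpos.le
          have hM' : M = t := max_eq_left htpos.le
          rw [Set.indicator_of_mem (by rw [hm', hM']; exact Set.mem_Ioc.mpr ⟨hzpos, hztlt.le⟩),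
            Set.indicator_of_notMem (by rw [hM']; exact fun h => absurd h (not_lt.mpr hztlt.le)),
            add_zero]
        rw [hHz]
        apply hexp_pab (-(lam * (r * z)) - Real.log r * E) _ (abs_neg _) ?_
        have hw : |(-(lam * (r * z)))| ≤ lam * |t| * r := by
          have h1 : (0:ℝ) ≤ z := hzpos.le
          have h2 : z ≤ |t| := by linarith only [le_abs_self t, hztlt]
          rw [abs_neg, show lam * (r * z) = lam * r * z from by ring,
            abs_of_nonneg (mul_nonneg (by positivity) h1)]
          calc lam * r * z ≤ lam * r * |t| :=
              mul_le_mul_of_nonneg_left h2 (by positivity)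
            _ = lam * |t| * r := by ring
        have hlog' : |Real.log r * E| ≤ η := by
          apply hlogE
          rw [abs_of_pos hzpos]
          have h3 : |t| = t := abs_of_pos htpos
          linarith only [h3, hztlt, htT]
        calc |(-(lam * (r * z)) - Real.log r * E)|
            ≤ |(-(lam * (r * z)))| + |Real.log r * E| := abs_sub _ _
          _ ≤ lam * |t| * r + η := add_le_add hw hlog'
          _ = θmax := hθmax_def.symm
      · -- Case D : t < z, 0 < z : the tail
        have htz : t < z := lt_of_le_of_ne htz' (Ne.symm hzt)
        have hi1' : u + r * z ∈ Set.Ici (u + r * t) := by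
          simp only [Set.mem_Ici]
          have h := mul_le_mul_of_nonneg_left htz.le hr0.le
          linarith only [h]
        have hi2' : u + r * z ∈ Set.Ici u := by
          simp only [Set.mem_Ici]
          have h := mul_pos hr0 hzpos
          linarith only [h]
        have hsgn : sgnIndOpen t z = 0 := by
          simp only [sgnIndOpen]
          split_ifs with h0t
          · exact Set.indicator_of_notMem (fun h => absurd h.2 (not_lt.mpr htz.le)) _
          · rw [Set.indicator_of_notMem (fun h => absurd h.2 (not_lt.mpr hzpos.le)) _]
            exact neg_zero
        rw [Set.indicator_of_mem hi1' _, Set.indicator_of_mem hi2' _, hsgn, add_zero]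
        simp only [mul_one]
        have hMz : M < z := by
          rw [hM_def]; exact max_lt htz hzpos
        have hHz : H z = Aa * Real.exp (-βa * z) + Ab * Real.exp (-βb * z) := by
          simp only [hH_def]
          rw [Set.indicator_of_notMem (fun h => absurd h.2 (not_le.mpr hMz)) _,
            Set.indicator_of_mem (Set.mem_Ioi.mpr hMz), zero_add]
        rw [hHz]
        -- the factored bound
        set Y : ℝ := C * r ^ ((1:ℝ) - c) * Real.exp (-(lam * (r * z))) with hY_def
        have hY0 : 0 ≤ Y := by positivity
        have hVle : |(Real.exp (-(lam * (r * z - r * t))) - Real.exp (-(lam * (r * z)))) / r ^ E| ≤ Y := by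
          have hfac : Real.exp (-(lam * (r * z - r * t))) - Real.exp (-(lam * (r * z)))
              = Real.exp (-(lam * (r * z))) * (Real.exp (lam * (r * t)) - 1) := by
            rw [show -(lam * (r * z - r * t)) = -(lam * (r * z)) + lam * (r * t) from by ring,
              Real.exp_add]
            ring
          rw [hfac, abs_div, abs_mul, abs_of_pos (Real.exp_pos _), abs_of_pos hrE]
          have habs1 : |lam * (r * t)| = lam * |t| * r := by
            rw [abs_mul, abs_mul, abs_of_pos hlam, abs_of_pos hr0]; ring
          have hsml : |lam * (r * t)| ≤ 1 := by
            rw [habs1]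
            have h4 : lam * |t| * r ≤ θmax := by
              rw [hθmax_def]; linarith only [hηnn]
            linarith only [h4, hθmax_le1]
          have hexp1 : |Real.exp (lam * (r * t)) - 1| ≤ C * r := by
            have h2 := Real.abs_exp_sub_one_le hsml
            rw [habs1] at h2
            rw [hC_def]
            calc |Real.exp (lam * (r * t)) - 1| ≤ 2 * (lam * |t| * r) := h2
              _ = 2 * lam * |t| * r := by ring
          have hrc : r ^ (c:ℝ) ≤ r ^ E := Real.rpow_le_rpow_of_exponent_ge hr0 hr1.le (abs_le.mp hEc).2
          have hrcpos : (0:ℝ) < r ^ (c:ℝ) := Real.rpow_pos_of_pos hr0 _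
          calc Real.exp (-(lam * (r * z))) * |Real.exp (lam * (r * t)) - 1| / r ^ E
              ≤ Real.exp (-(lam * (r * z))) * (C * r) / r ^ E := by gcongr
            _ ≤ Real.exp (-(lam * (r * z))) * (C * r) / r ^ (c:ℝ) := by gcongr
            _ = Y := by
                rw [hY_def,
                  show r ^ ((1:ℝ) - c) = r / r ^ (c:ℝ) from by
                    rw [Real.rpow_sub hr0, Real.rpow_one]]
                field_simp
        calc pab a b ((Real.exp (-(lam * (r * z - r * t))) - Real.exp (-(lam * (r * z)))) / r ^ E)
            ≤ pab a b Y := pab_le_pab ha0 hbpos hVle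
          _ ≤ Y ^ (a:ℝ) + Y ^ (b:ℝ) := pab_le_add hY0
          _ = Aa * Real.exp (-βa * z) + Ab * Real.exp (-βb * z) := by
              have hYa : Y ^ (a:ℝ) = Aa * Real.exp (-βa * z) := by
                rw [hY_def, Real.mul_rpow hYbase0 (Real.exp_pos _).le, ← Real.exp_mul,
                  show -(lam * (r * z)) * a = -βa * z from by rw [hβa_def]; ring]
              have hYb : Y ^ (b:ℝ) = Ab * Real.exp (-βb * z) := by
                rw [hY_def, Real.mul_rpow hYbase0 (Real.exp_pos _).le, ← Real.exp_mul,
                  show -(lam * (r * z)) * b = -βb * z from by rw [hβb_def]; ring]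
              rw [hYa, hYb]
  -- integral bound
  have h1 : (∫ z : ℝ, pab a b
      ((Real.exp (-lam * ((u + r * z) - (u + r * t))) *
          (Set.Ici (u + r * t)).indicator (fun _ => (1:ℝ)) (u + r * z) -
        Real.exp (-lam * ((u + r * z) - u)) *
          (Set.Ici u).indicator (fun _ => (1:ℝ)) (u + r * z)) /
        r ^ (1 / α u - 1 / α (u + r * z)) + sgnIndOpen t z)) ≤ ∫ z : ℝ, H z :=
    integral_mono_of_nonneg (Filter.Eventually.of_forall fun z => pab_nonneg _ _ _) hHint hfH
  have h2 : (∫ z : ℝ, H z) < ε := by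
    have key : ∀ β : ℝ, 0 < β → (∫ z in Ioi M, Real.exp (-β * z)) ≤ β⁻¹ := by
      intro β hβ
      have h := integral_comp_mul_left_Ioi (fun y => Real.exp (-y)) M hβ
      simp only [integral_exp_neg_Ioi, smul_eq_mul] at h
      have h' : (∫ z in Ioi M, Real.exp (-β * z)) = β⁻¹ * Real.exp (-(β * M)) := by
        simpa [neg_mul] using h
      rw [h']
      have he1 : Real.exp (-(β * M)) ≤ 1 := by
        rw [Real.exp_le_one_iff]
        have : 0 ≤ β * M := mul_nonneg hβ.le hM0
        linarith
      have := mul_le_mul_of_nonneg_left he1 (inv_nonneg.mpr hβ.le)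
      simpa using this
    have hint2a : IntegrableOn (fun z => Aa * Real.exp (-βa * z)) (Ioi M) :=
      (exp_neg_integrableOn_Ioi M hβa0).const_mul Aa
    have hint2b : IntegrableOn (fun z => Ab * Real.exp (-βb * z)) (Ioi M) :=
      (exp_neg_integrableOn_Ioi M hβb0).const_mul Ab
    have hsplit : (∫ z : ℝ, H z) = P * |t| +
        ((∫ z in Ioi M, Aa * Real.exp (-βa * z)) + (∫ z in Ioi M, Ab * Real.exp (-βb * z))) := by
      rw [hH_def, integral_add hi1 hi2, integral_indicator measurableSet_Ioc,
        integral_indicator measurableSet_Ioi, setIntegral_const, smul_eq_mul,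
        Real.volume_real_Ioc, max_eq_left (by rw [hMm]; exact abs_nonneg t), hMm,
        integral_add hint2a hint2b, mul_comm]
    have hterm : ∀ (β q e kk : ℝ), 0 < β → 0 ≤ q → (q * β⁻¹ = kk * r ^ e) → 0 < e → 0 ≤ kk →
        r < (ε / (3 * (kk + 1))) ^ (1/e : ℝ) →
        (∫ z in Ioi M, q * Real.exp (-β * z)) < ε / 3 := by
      intro β q e kk hβ hq heq he hkk hre
      rw [MeasureTheory.integral_const_mul]
      have h1 : q * (∫ z in Ioi M, Real.exp (-β * z)) ≤ q * β⁻¹ :=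
        mul_le_mul_of_nonneg_left (key β hβ) hq
      have h2 : r ^ (e:ℝ) ≤ ε / (3 * (kk + 1)) := by
        have := Real.rpow_le_rpow hr0.le hre.le he.le
        rwa [one_div, Real.rpow_inv_rpow (by positivity) he.ne'] at this
      have h3 : kk * r ^ (e:ℝ) ≤ kk * (ε / (3 * (kk + 1))) :=
        mul_le_mul_of_nonneg_left h2 hkk
      have h4 : kk * (ε / (3 * (kk + 1))) < ε / 3 := aux_frac_lt hkk hε
      linarith [heq ▸ h1]
    have hAterm : (∫ z in Ioi M, Aa * Real.exp (-βa * z)) < ε / 3 := by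
      refine hterm βa Aa ea Ka hβa0 hAa0 ?_ hea hKa0 (lt_of_lt_of_le hrr₃ (min_le_right _ _))
      have e1 : Aa = C ^ (a:ℝ) * r ^ ((1 - c) * a) := by
        rw [hAa_def, Real.mul_rpow hC0 (Real.rpow_nonneg hr0.le _), ← Real.rpow_mul hr0.le]
      have e2 : ((1:ℝ) - c) * a = ea + 1 := by rw [hea_def]; ring
      rw [e1, e2, Real.rpow_add hr0, Real.rpow_one, hβa_def, hKa_def]
      field_simp
    have hBterm : (∫ z in Ioi M, Ab * Real.exp (-βb * z)) < ε / 3 := by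
      refine hterm βb Ab eb Kb hβb0 hAb0 ?_ heb hKb0 (lt_of_lt_of_le hrr₄ (min_le_right _ _))
      have e1 : Ab = C ^ (b:ℝ) * r ^ ((1 - c) * b) := by
        rw [hAb_def, Real.mul_rpow hC0 (Real.rpow_nonneg hr0.le _), ← Real.rpow_mul hr0.le]
      have e2 : ((1:ℝ) - c) * b = eb + 1 := by rw [heb_def]; ring
      rw [e1, e2, Real.rpow_add hr0, Real.rpow_one, hβb_def, hKb_def]
      field_simp
    rw [hsplit]
    have := hPbound
    linarith [mul_comm P |t|]
  rw [Real.norm_eq_abs, abs_of_nonneg (integral_nonneg fun z => pab_nonneg _ _ _)]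
  exact lt_of_le_of_lt h1 h2
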